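/- arXiv:2502.15374 — 2 statements merged into one kernel-verified Lean document; each statement's English description precedes it below -/
import Mathlib

section
/- Let g : ℝᵖ → ℝ be square-integrable with E[g(X)] = 0 and suppose g(X) is orthogonal (in L²) to every square-integrable σ(f₀(X))-measurable function, where Y ⫫ X | f₀(X). Then E(g(X) | Y) = 0 almost surely. -/
open MeasureTheory ProbabilityTheory

/-- If `Y ⫫ X ∣ σ(f₀(X))`, `g : ℝᵖ → ℝ` is square-integrable with `E[g(X)] = 0`, and
`g(X)` is orthogonal in `L²` to every square-integrable `σ(f₀(X))`-measurable function
(equivalently, to `h(f₀(X))` for every measurable square-integrable `h`), then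
`E(g(X) ∣ Y) = 0` almost surely. -/
theorem stmt_7 {Ω ΩY : Type*} [MeasurableSpace Ω] [StandardBorelSpace Ω] [Nonempty Ω]
    {p d : ℕ} [mY : MeasurableSpace ΩY]
    (P : Measure Ω) [IsProbabilityMeasure P]
    (X : Ω → (Fin p → ℝ)) (Y : Ω → ΩY) (f₀ : (Fin p → ℝ) → (Fin d → ℝ))
    (hX : Measurable X) (hY : Measurable Y) (hf₀ : Measurable f₀)
    (hle : MeasurableSpace.comap (fun ω => f₀ (X ω)) inferInstance ≤ ‹MeasurableSpace Ω›)
    (hCI : CondIndepFun (MeasurableSpace.comap (fun ω => f₀ (X ω)) inferInstance) hle Y X P)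
    (g : (Fin p → ℝ) → ℝ) (hg : Measurable g)
    (hgL2 : MemLp (fun ω => g (X ω)) 2 P)
    (hgmean : ∫ ω, g (X ω) ∂P = 0)
    (horth : ∀ h : (Fin d → ℝ) → ℝ, Measurable h →
      MemLp (fun ω => h (f₀ (X ω))) 2 P →
      ∫ ω, g (X ω) * h (f₀ (X ω)) ∂P = 0) :
    P[fun ω => g (X ω) | MeasurableSpace.comap Y mY] =ᵐ[P] fun _ => (0 : ℝ) := by
  have hgX_int : Integrable (fun ω => g (X ω)) P := hgL2.integrable one_le_two
  -- Step 1: E[g(X) | σ(f₀(X))] = 0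
  have hset0 : ∀ s : Set Ω, MeasurableSet[MeasurableSpace.comap (fun ω => f₀ (X ω)) inferInstance] s → ∫ ω in s, g (X ω) ∂P = 0 := by
    rintro s ⟨C, hC, rfl⟩
    have hind : ∀ ω, Set.indicator ((fun ω => f₀ (X ω)) ⁻¹' C) (fun ω => g (X ω)) ω
        = g (X ω) * C.indicator (fun _ => (1:ℝ)) (f₀ (X ω)) := by
      intro ω; by_cases h : f₀ (X ω) ∈ C <;> simp [Set.indicator_apply, h]
    rw [← integral_indicator (hle _ ⟨C, hC, rfl⟩)]
    simp_rw [hind]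
    refine horth _ (measurable_const.indicator hC) ?_
    refine MemLp.of_bound (((measurable_one.indicator hC).comp (hf₀.comp hX)).aestronglyMeasurable) 1 ?_
    refine Filter.Eventually.of_forall fun ω => ?_
    by_cases h : f₀ (X ω) ∈ C <;> simp [Set.indicator_apply, h]
  have hcond0 : P[(fun ω => g (X ω)) | MeasurableSpace.comap (fun ω => f₀ (X ω)) inferInstance] =ᵐ[P] fun _ => (0:ℝ) := by
    refine (ae_eq_condExp_of_forall_setIntegral_eq hle hgX_int
      (fun s _ _ => (integrable_const (0:ℝ)).integrableOn)
      (fun s hs _ => by rw [hset0 s hs]; simp)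
      (stronglyMeasurable_const.aestronglyMeasurable)).symm
  -- Step 2
  rw [condIndepFun_iff_condExp_inter_preimage_eq_mul hY hX] at hCI
  have key : ∀ B : Set ΩY, MeasurableSet B → ∫ ω in Y ⁻¹' B, g (X ω) ∂P = 0 := by
    intro B hB
    set A := Y ⁻¹' B with hA_def
    have hA : MeasurableSet A := hY hB
    set cA := P[A.indicator (fun _ => (1:ℝ)) | MeasurableSpace.comap (fun ω => f₀ (X ω)) inferInstance] with hcA_def
    have hcA_sm : StronglyMeasurable[MeasurableSpace.comap (fun ω => f₀ (X ω)) inferInstance] cA := stronglyMeasurable_condExp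
    have hcA_meas : Measurable cA := (hcA_sm.measurable).mono hle le_rfl
    have hind_int : Integrable (A.indicator (fun _ => (1:ℝ))) P :=
      (integrable_const (1:ℝ)).indicator hA
    have hcA_nonneg : 0 ≤ᵐ[P] cA :=
      condExp_nonneg (Filter.Eventually.of_forall fun ω => Set.indicator_nonneg (fun _ _ => zero_le_one) ω)
    have hcA_le_one : ∀ᵐ ω ∂P, cA ω ≤ 1 := by
      have h1 : cA ≤ᵐ[P] P[(fun _ => (1:ℝ)) | MeasurableSpace.comap (fun ω => f₀ (X ω)) inferInstance] :=
        condExp_mono hind_int (integrable_const 1)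
          (Filter.Eventually.of_forall fun ω => Set.indicator_le_self' (fun _ _ => zero_le_one) ω)
      rw [condExp_const hle (1:ℝ)] at h1
      exact h1
    have hcA_bdd : ∀ᵐ ω ∂P, ‖cA ω‖ ≤ 1 := by
      filter_upwards [hcA_nonneg, hcA_le_one] with ω h1 h2
      rw [Real.norm_eq_abs, abs_of_nonneg h1]; exact h2
    -- swap lemma
    have hswap : ∀ t : Set (Fin p → ℝ), MeasurableSet t →
        ∫ ω in X ⁻¹' t, cA ω ∂P = (P (A ∩ X ⁻¹' t)).toReal := by
      intro t ht
      have h1 := hCI B t hB ht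
      have hindt_int : Integrable ((X ⁻¹' t).indicator (fun _ => (1:ℝ))) P :=
        (integrable_const (1:ℝ)).indicator (hX ht)
      have hprod_int : Integrable (cA * (X ⁻¹' t).indicator (fun _ => (1:ℝ))) P :=
        hindt_int.bdd_mul hcA_meas.aestronglyMeasurable hcA_bdd
      have h2 : P[cA * (X ⁻¹' t).indicator (fun _ => (1:ℝ)) | MeasurableSpace.comap (fun ω => f₀ (X ω)) inferInstance]
          =ᵐ[P] cA * P[(X ⁻¹' t).indicator (fun _ => (1:ℝ)) | MeasurableSpace.comap (fun ω => f₀ (X ω)) inferInstance] :=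
        condExp_mul_of_stronglyMeasurable_left hcA_sm hprod_int hindt_int
      calc ∫ ω in X ⁻¹' t, cA ω ∂P
          = ∫ ω, (cA * (X ⁻¹' t).indicator (fun _ => (1:ℝ))) ω ∂P := by
            rw [← integral_indicator (hX ht)]
            refine integral_congr_ae (Filter.Eventually.of_forall fun ω => ?_)
            by_cases h : ω ∈ X ⁻¹' t <;> simp [Set.indicator_apply, h]
        _ = ∫ ω, (P[cA * (X ⁻¹' t).indicator (fun _ => (1:ℝ)) | MeasurableSpace.comap (fun ω => f₀ (X ω)) inferInstance]) ω ∂P :=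
            (integral_condExp hle).symm
        _ = ∫ ω, (cA * P[(X ⁻¹' t).indicator (fun _ => (1:ℝ)) | MeasurableSpace.comap (fun ω => f₀ (X ω)) inferInstance]) ω ∂P :=
            integral_congr_ae h2
        _ = ∫ ω, (P[(A ∩ X ⁻¹' t).indicator (fun _ => (1:ℝ)) | MeasurableSpace.comap (fun ω => f₀ (X ω)) inferInstance]) ω ∂P :=
            (integral_congr_ae h1).symm
        _ = ∫ ω, (A ∩ X ⁻¹' t).indicator (fun _ => (1:ℝ)) ω ∂P :=
            integral_condExp hle
        _ = (P (A ∩ X ⁻¹' t)).toReal := integral_indicator_one (hA.inter (hX ht))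
    -- measure equality
    have hν : Measure.map X (P.restrict A)
        = Measure.map X (P.withDensity (fun ω => ((cA ω).toNNReal : ENNReal))) := by
      ext t ht
      rw [Measure.map_apply hX ht, Measure.map_apply hX ht, Measure.restrict_apply (hX ht),
        withDensity_apply _ (hX ht),
        Set.inter_comm]
      have hl : ∫⁻ ω in X ⁻¹' t, ((cA ω).toNNReal : ENNReal) ∂P
          = ENNReal.ofReal (∫ ω in X ⁻¹' t, cA ω ∂P) :=
        (ofReal_integral_eq_lintegral_ofReal integrable_condExp.integrableOn
          (ae_restrict_of_ae hcA_nonneg)).symm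
      rw [hl, hswap t ht, ENNReal.ofReal_toReal (measure_ne_top P _)]
    -- conclude
    have hmap1 : ∫ ω in A, g (X ω) ∂P = ∫ y, g y ∂(Measure.map X (P.restrict A)) :=
      (integral_map hX.aemeasurable hg.aestronglyMeasurable).symm
    have hmap2 : ∫ y, g y ∂(Measure.map X (P.withDensity (fun ω => ((cA ω).toNNReal : ENNReal))))
        = ∫ ω, g (X ω) ∂(P.withDensity (fun ω => ((cA ω).toNNReal : ENNReal))) :=
      integral_map hX.aemeasurable hg.aestronglyMeasurable
    rw [hmap1, hν, hmap2,
      integral_withDensity_eq_integral_smul (f := fun ω => (cA ω).toNNReal) (measurable_real_toNNReal.comp hcA_meas) _]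
    have heq : (fun ω => (cA ω).toNNReal • g (X ω))
        =ᵐ[P] fun ω => cA ω * g (X ω) := by
      filter_upwards [hcA_nonneg] with ω h
      rw [NNReal.smul_def, smul_eq_mul, Real.coe_toNNReal _ h]
    rw [integral_congr_ae heq]
    have hprod_int : Integrable (fun ω => cA ω * g (X ω)) P :=
      hgX_int.bdd_mul hcA_meas.aestronglyMeasurable hcA_bdd
    have h3 : P[(fun ω => cA ω * g (X ω)) | MeasurableSpace.comap (fun ω => f₀ (X ω)) inferInstance] =ᵐ[P] cA * P[(fun ω => g (X ω)) | MeasurableSpace.comap (fun ω => f₀ (X ω)) inferInstance] :=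
      condExp_mul_of_stronglyMeasurable_left hcA_sm hprod_int hgX_int
    rw [← integral_condExp hle (f := fun ω => cA ω * g (X ω)), integral_congr_ae h3]
    have : (cA * P[(fun ω => g (X ω)) | MeasurableSpace.comap (fun ω => f₀ (X ω)) inferInstance]) =ᵐ[P] fun _ => (0:ℝ) := by
      filter_upwards [hcond0] with ω h
      simp [Pi.mul_apply, h]
    rw [integral_congr_ae this, integral_zero]
  -- Step 3
  refine (ae_eq_condExp_of_forall_setIntegral_eq hY.comap_le hgX_int
    (fun s _ _ => (integrable_const (0:ℝ)).integrableOn)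
    (fun s hs _ => ?_) (stronglyMeasurable_const.aestronglyMeasurable)).symm
  obtain ⟨B, hB, rfl⟩ := hs
  rw [key B hB]; simp
end

section
/- For symmetric positive definite matrices Y₁, Y₂ with Cholesky factors P₁, P₂ (lower triangular with positive diagonal), the Log-Cholesky distance d_L(Y₁, Y₂) = { ‖⌊P₁⌋ − ⌊P₂⌋‖_F² + ‖log 𝔻(P₁) − log 𝔻(P₂)‖_F² }^{1/2} is a metric on the space of m×m symmetric positive definite matrices: it is nonnegative, symmetric, vanishes iff Y₁ = Y₂, and satisfies the triangle inequality. -/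
open Matrix Finset

/-- The Log-Cholesky distance built from a Cholesky factorization map `chol`:
`d_L(Y₁,Y₂) = { ‖⌊P₁⌋ − ⌊P₂⌋‖_F² + ‖log 𝔻(P₁) − log 𝔻(P₂)‖_F² }^{1/2}`, where
`Pₐ = chol Yₐ`, `⌊P⌋` is the strictly lower-triangular part and `𝔻(P)` the diagonal. -/
noncomputable def logCholeskyDist {m : ℕ}
    (chol : Matrix (Fin m) (Fin m) ℝ → Matrix (Fin m) (Fin m) ℝ)
    (Y₁ Y₂ : Matrix (Fin m) (Fin m) ℝ) : ℝ :=
  Real.sqrt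
    ((∑ i : Fin m, ∑ j : Fin m,
        (if j < i then (chol Y₁ i j - chol Y₂ i j) ^ 2 else 0))
      + ∑ i : Fin m, (Real.log (chol Y₁ i i) - Real.log (chol Y₂ i i)) ^ 2)

/-- Given a Cholesky factorization map `chol` assigning to each symmetric positive-definite
matrix its lower-triangular factor with positive diagonal, the Log-Cholesky distance is a
metric on `S_m⁺`: nonnegative, symmetric, vanishing iff the matrices are equal, and
satisfying the triangle inequality. -/
theorem stmt_16 {m : ℕ}
    (chol : Matrix (Fin m) (Fin m) ℝ → Matrix (Fin m) (Fin m) ℝ)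
    (hlow : ∀ Y : Matrix (Fin m) (Fin m) ℝ, Y.PosDef → Y.IsSymm →
      ∀ i j : Fin m, i < j → chol Y i j = 0)
    (hdiag : ∀ Y : Matrix (Fin m) (Fin m) ℝ, Y.PosDef → Y.IsSymm →
      ∀ i : Fin m, 0 < chol Y i i)
    (hfac : ∀ Y : Matrix (Fin m) (Fin m) ℝ, Y.PosDef → Y.IsSymm →
      chol Y * (chol Y)ᵀ = Y) :
    ∀ Y₁ Y₂ Y₃ : Matrix (Fin m) (Fin m) ℝ,
      Y₁.PosDef → Y₁.IsSymm → Y₂.PosDef → Y₂.IsSymm → Y₃.PosDef → Y₃.IsSymm →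
      0 ≤ logCholeskyDist chol Y₁ Y₂ ∧
      logCholeskyDist chol Y₁ Y₂ = logCholeskyDist chol Y₂ Y₁ ∧
      (logCholeskyDist chol Y₁ Y₂ = 0 ↔ Y₁ = Y₂) ∧
      logCholeskyDist chol Y₁ Y₃ ≤ logCholeskyDist chol Y₁ Y₂ + logCholeskyDist chol Y₂ Y₃ := by
  intro Y₁ Y₂ Y₃ h1p h1s h2p h2s h3p h3s
  set F : Matrix (Fin m) (Fin m) ℝ → EuclideanSpace ℝ ((Fin m × Fin m) ⊕ Fin m) :=
    fun Y => WithLp.toLp 2 (Sum.elim (fun p : Fin m × Fin m => if p.2 < p.1 then chol Y p.1 p.2 else 0)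
      (fun i => Real.log (chol Y i i))) with hFdef
  have key : ∀ A B, logCholeskyDist chol A B = dist (F A) (F B) := by
    intro A B
    rw [EuclideanSpace.dist_eq, logCholeskyDist]
    congr 1
    rw [Fintype.sum_sum_type]
    congr 1
    · rw [Fintype.sum_prod_type]
      refine Finset.sum_congr rfl fun i _ => Finset.sum_congr rfl fun j _ => ?_
      simp only [hFdef, PiLp.toLp_apply, Sum.elim_inl, Real.dist_eq]
      by_cases h : j < i
      · simp [h, sq_abs]
      · simp [h]
    · refine Finset.sum_congr rfl fun i _ => ?_
      simp [hFdef, Real.dist_eq, sq_abs]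
  refine ⟨?_, ?_, ?_, ?_⟩
  · rw [key]; exact dist_nonneg
  · rw [key, key]; exact dist_comm _ _
  · rw [key]
    constructor
    · intro h
      have hF : F Y₁ = F Y₂ := by rwa [dist_eq_zero] at h
      have hchol : chol Y₁ = chol Y₂ := by
        ext i j
        rcases lt_trichotomy i j with hij | hij | hij
        · rw [hlow Y₁ h1p h1s i j hij, hlow Y₂ h2p h2s i j hij]
        · subst hij
          have h2 := congrArg (· (Sum.inr i)) hF
          simp only [hFdef, PiLp.toLp_apply, Sum.elim_inr] at h2
          exact Real.log_injOn_pos (Set.mem_Ioi.mpr (hdiag Y₁ h1p h1s i))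
            (Set.mem_Ioi.mpr (hdiag Y₂ h2p h2s i)) h2
        · have h2 := congrArg (· (Sum.inl (i, j))) hF
          simpa [hFdef, hij] using h2
      calc Y₁ = chol Y₁ * (chol Y₁)ᵀ := (hfac Y₁ h1p h1s).symm
        _ = chol Y₂ * (chol Y₂)ᵀ := by rw [hchol]
        _ = Y₂ := hfac Y₂ h2p h2s
    · rintro rfl; exact dist_self _
  · rw [key, key, key]; exact dist_triangle _ _ _
end
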